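/- In the ring ℚ⟦x,y⟧ of formal power series in two variables, for all n, k ≥ 0 the coefficient of x^n y^k in (1 - x - y - x·y)⁻¹ equals the coefficient of X^{n+k} in (1-X)⁻¹ · (X(1+X)·(1-X)⁻¹)^k in ℚ⟦X⟧. That is, the Delannoy square with generating function 1/(1-x-y-xy) is the rectification of the Delannoy triangle, the Riordan array (1/(1-x), x(1+x)/(1-x)). -/

import Mathlib

noncomputable section

open PowerSeries

/-- Delannoy numbers. -/
private def Del : ℕ → ℕ → ℚ
  | 0, _ => 1
  | _+1, 0 => 1
  | n+1, k+1 => Del n (k+1) + Del (n+1) k + Del n k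

private lemma Del_zero_left (k : ℕ) : Del 0 k = 1 := by cases k <;> simp [Del]

private lemma Del_zero_right (n : ℕ) : Del n 0 = 1 := by cases n <;> simp [Del]

private lemma Del_succ (n k : ℕ) :
    Del (n+1) (k+1) = Del n (k+1) + Del (n+1) k + Del n k := by simp [Del]

/-- `g = (1-X)⁻¹`. -/
private def gg : PowerSeries ℚ := (1 - PowerSeries.X)⁻¹

private lemma const_one_sub_X : constantCoeff (R := ℚ) (1 - PowerSeries.X) = 1 := by simp

private lemma hgg : (1 - PowerSeries.X) * gg = 1 :=
  PowerSeries.mul_inv_cancel _ (by rw [const_one_sub_X]; norm_num)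

private lemma gg_eq : gg = 1 + PowerSeries.X * gg := by
  have h := hgg
  rw [sub_mul, one_mul] at h
  linear_combination h

private lemma constCoeff_gg : constantCoeff (R := ℚ) gg = 1 := by
  rw [gg, PowerSeries.constantCoeff_inv, const_one_sub_X]; norm_num

private lemma coeff_gg (n : ℕ) : PowerSeries.coeff (R := ℚ) n gg = 1 := by
  induction n with
  | zero => rw [coeff_zero_eq_constantCoeff_apply, constCoeff_gg]
  | succ n ih =>
    conv_lhs => rw [gg_eq]
    rw [map_add, PowerSeries.coeff_succ_X_mul, ih, PowerSeries.coeff_one,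
      if_neg (Nat.succ_ne_zero n)]
    ring

/-- `A k = g * f^k` where `f = X(1+X)g`. -/
private def A (k : ℕ) : PowerSeries ℚ :=
  gg * (PowerSeries.X * (1 + PowerSeries.X) * gg) ^ k

private lemma hA (k : ℕ) :
    A k = PowerSeries.X ^ k * (gg * ((1 + PowerSeries.X) * gg) ^ k) := by
  rw [A, show PowerSeries.X * (1 + PowerSeries.X) * gg
    = PowerSeries.X * ((1 + PowerSeries.X) * gg) by ring, mul_pow]
  ring

private lemma diagA (k : ℕ) : PowerSeries.coeff (R := ℚ) k (A k) = 1 := by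
  have h := hA k
  have : PowerSeries.coeff (R := ℚ) (0 + k) (A k)
      = PowerSeries.coeff (R := ℚ) 0 (gg * ((1 + PowerSeries.X) * gg) ^ k) := by
    rw [h, PowerSeries.coeff_X_pow_mul]
  rw [zero_add] at this
  rw [this, coeff_zero_eq_constantCoeff_apply, map_mul, map_pow, map_mul, map_add,
    constCoeff_gg, map_one, PowerSeries.constantCoeff_X]
  norm_num

private lemma hrec (k : ℕ) :
    A (k+1) = PowerSeries.X * A (k+1)
      + (PowerSeries.X + PowerSeries.X ^ 2) * A k := by
  have h1 : A (k+1) = gg * ((PowerSeries.X + PowerSeries.X ^ 2) * A k) := by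
    rw [A, A, pow_succ]; ring
  calc A (k+1) = gg * ((PowerSeries.X + PowerSeries.X ^ 2) * A k) := h1
    _ = (1 + PowerSeries.X * gg) * ((PowerSeries.X + PowerSeries.X ^ 2) * A k) := by
        rw [← gg_eq]
    _ = PowerSeries.X * (gg * ((PowerSeries.X + PowerSeries.X ^ 2) * A k))
        + (PowerSeries.X + PowerSeries.X ^ 2) * A k := by ring
    _ = _ := by rw [← h1]

private lemma coeffA : ∀ k n, PowerSeries.coeff (R := ℚ) (n + k) (A k) = Del n k := by
  intro k
  induction k with
  | zero =>
      intro n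
      simp only [A, pow_zero, mul_one, Nat.add_zero, coeff_gg, Del_zero_right]
  | succ k ih =>
      intro n
      induction n with
      | zero =>
          rw [Nat.zero_add, diagA, Del_zero_left]
      | succ n ihn =>
          have heq : n + 1 + (k + 1) = (n + k) + 2 := by omega
          rw [heq]
          conv_lhs => rw [hrec k]
          rw [map_add, add_mul, map_add]
          have e1 : (n + k) + 2 = (n + k + 1) + 1 := rfl
          rw [e1, PowerSeries.coeff_succ_X_mul, PowerSeries.coeff_succ_X_mul]
          have e2 : PowerSeries.coeff (R := ℚ) (n + k + 2) (PowerSeries.X ^ 2 * A k)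
              = PowerSeries.coeff (R := ℚ) (n + k) (A k) := by
            have := PowerSeries.coeff_X_pow_mul (A k) 2 (n + k)
            rwa [show n + k + 2 = (n + k) + 2 from rfl]
          rw [e2]
          have h1 : PowerSeries.coeff (R := ℚ) (n + k + 1) (A (k+1)) = Del n (k+1) := by
            have : n + (k + 1) = n + k + 1 := by omega
            rw [← this]; exact ihn
          have h2 : PowerSeries.coeff (R := ℚ) (n + k + 1) (A k) = Del (n+1) k := by
            have : (n + 1) + k = n + k + 1 := by omega
            rw [← this]; exact ih (n+1)
          rw [h1, h2, ih n, Del_succ]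
          ring

/-- The two-variable series of Delannoy numbers. -/
private def G : MvPowerSeries (Fin 2) ℚ := fun m => Del (m 0) (m 1)

private lemma coeff_G (m : Fin 2 →₀ ℕ) :
    MvPowerSeries.coeff (R := ℚ) m G = Del (m 0) (m 1) := rfl

private def u : MvPowerSeries (Fin 2) ℚ :=
  1 - MvPowerSeries.X (0 : Fin 2) - MvPowerSeries.X (1 : Fin 2)
    - MvPowerSeries.X (0 : Fin 2) * MvPowerSeries.X (1 : Fin 2)

private lemma const_u : MvPowerSeries.constantCoeff (σ := Fin 2) (R := ℚ) u = 1 := by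
  simp [u]

private lemma huG : u * G = 1 := by
  ext m
  have expand : u * G = G - MvPowerSeries.X (0 : Fin 2) * G
      - MvPowerSeries.X (1 : Fin 2) * G
      - MvPowerSeries.X (0 : Fin 2) * MvPowerSeries.X (1 : Fin 2) * G := by
    rw [u]; ring
  rw [expand]
  rw [map_sub, map_sub, map_sub]
  have hX01 : MvPowerSeries.X (0 : Fin 2) * MvPowerSeries.X (1 : Fin 2)
      = MvPowerSeries.monomial (R := ℚ) (Finsupp.single (0 : Fin 2) 1 + Finsupp.single (1 : Fin 2) 1)
          (1 : ℚ) := by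
    rw [MvPowerSeries.X_def, MvPowerSeries.X_def, MvPowerSeries.monomial_mul_monomial, one_mul]
  rw [hX01, MvPowerSeries.X_def (0 : Fin 2), MvPowerSeries.X_def (1 : Fin 2),
    MvPowerSeries.coeff_monomial_mul, MvPowerSeries.coeff_monomial_mul,
    MvPowerSeries.coeff_monomial_mul, coeff_G, MvPowerSeries.coeff_one]
  have hle0 : Finsupp.single (0 : Fin 2) 1 ≤ m ↔ 1 ≤ m 0 := Finsupp.single_le_iff
  have hle1 : Finsupp.single (1 : Fin 2) 1 ≤ m ↔ 1 ≤ m 1 := Finsupp.single_le_iff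
  have hle01 : Finsupp.single (0 : Fin 2) 1 + Finsupp.single (1 : Fin 2) 1 ≤ m
      ↔ 1 ≤ m 0 ∧ 1 ≤ m 1 := by
    rw [Finsupp.le_def]
    constructor
    · intro h
      constructor
      · have := h 0; simpa using this
      · have := h 1; simpa using this
    · rintro ⟨h0, h1⟩ i
      fin_cases i <;> simp [Finsupp.single_apply] <;> assumption
  have hsub0 : MvPowerSeries.coeff (R := ℚ) (m - Finsupp.single (0 : Fin 2) 1) G
      = Del (m 0 - 1) (m 1) := by
    rw [coeff_G]
    congr 1 <;> simp [Finsupp.tsub_apply, Finsupp.single_apply]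
  have hsub1 : MvPowerSeries.coeff (R := ℚ) (m - Finsupp.single (1 : Fin 2) 1) G
      = Del (m 0) (m 1 - 1) := by
    rw [coeff_G]
    congr 1 <;> simp [Finsupp.tsub_apply, Finsupp.single_apply]
  have hsub01 : MvPowerSeries.coeff (R := ℚ)
      (m - (Finsupp.single (0 : Fin 2) 1 + Finsupp.single (1 : Fin 2) 1)) G
      = Del (m 0 - 1) (m 1 - 1) := by
    rw [coeff_G]
    congr 1 <;> simp [Finsupp.tsub_apply, Finsupp.single_apply]
  have hm0 : m = 0 ↔ m 0 = 0 ∧ m 1 = 0 := by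
    constructor
    · intro h; rw [h]; simp
    · rintro ⟨h0, h1⟩
      ext i
      fin_cases i <;> simpa
  rw [hsub0, hsub1, hsub01]
  by_cases h0 : 1 ≤ m 0 <;> by_cases h1 : 1 ≤ m 1
  · rw [if_pos (hle0.mpr h0), if_pos (hle1.mpr h1), if_pos (hle01.mpr ⟨h0, h1⟩),
      if_neg (by rw [hm0]; omega)]
    obtain ⟨a, ha⟩ : ∃ a, m 0 = a + 1 := ⟨m 0 - 1, by omega⟩
    obtain ⟨b, hb⟩ : ∃ b, m 1 = b + 1 := ⟨m 1 - 1, by omega⟩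
    rw [ha, hb]
    simp only [Nat.add_sub_cancel, one_mul, Del_succ]
    ring
  · rw [if_pos (hle0.mpr h0), if_neg (fun h => h1 (hle1.mp h)),
      if_neg (fun h => h1 (hle01.mp h).2), if_neg (by rw [hm0]; omega)]
    have hb : m 1 = 0 := by omega
    obtain ⟨a, ha⟩ : ∃ a, m 0 = a + 1 := ⟨m 0 - 1, by omega⟩
    rw [ha, hb, Nat.add_sub_cancel, Del_zero_right, Del_zero_right]
    ring
  · rw [if_neg (fun h => h0 (hle0.mp h)), if_pos (hle1.mpr h1),
      if_neg (fun h => h0 (hle01.mp h).1), if_neg (by rw [hm0]; omega)]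
    have ha : m 0 = 0 := by omega
    obtain ⟨b, hb⟩ : ∃ b, m 1 = b + 1 := ⟨m 1 - 1, by omega⟩
    rw [ha, hb, Nat.add_sub_cancel, Del_zero_left, Del_zero_left]
    ring
  · rw [if_neg (fun h => h0 (hle0.mp h)), if_neg (fun h => h1 (hle1.mp h)),
      if_neg (fun h => h0 (hle01.mp h).1), if_pos (hm0.mpr ⟨by omega, by omega⟩)]
    have ha : m 0 = 0 := by omega
    have hb : m 1 = 0 := by omega
    rw [ha, hb, Del_zero_left]
    ring

private lemma u_inv_eq : u⁻¹ = G := by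
  have h : MvPowerSeries.constantCoeff (σ := Fin 2) (R := ℚ) u ≠ 0 := by
    rw [const_u]; norm_num
  exact ((MvPowerSeries.eq_inv_iff_mul_eq_one h).mpr (by rw [mul_comm]; exact huG)).symm

/-- For all `n, k ≥ 0`, the coefficient of `x^n y^k` in `(1 - x - y - xy)⁻¹`
(the Delannoy square) equals the coefficient of `X^{n+k}` in `(1-X)⁻¹·(X(1+X)(1-X)⁻¹)^k`:
the Delannoy square is the rectification of the Delannoy triangle, the Riordan array
`(1/(1-x), x(1+x)/(1-x))`. -/
theorem stmt_6 (n k : ℕ) :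
    MvPowerSeries.coeff (R := ℚ) (Finsupp.single (0 : Fin 2) n + Finsupp.single (1 : Fin 2) k)
      ((1 - MvPowerSeries.X (0 : Fin 2) - MvPowerSeries.X (1 : Fin 2)
        - MvPowerSeries.X (0 : Fin 2) * MvPowerSeries.X (1 : Fin 2) :
          MvPowerSeries (Fin 2) ℚ)⁻¹)
    = PowerSeries.coeff (R := ℚ) (n + k)
        ((1 - PowerSeries.X : PowerSeries ℚ)⁻¹
          * (PowerSeries.X * (1 + PowerSeries.X) * (1 - PowerSeries.X)⁻¹) ^ k) := by
  have hl : (1 - MvPowerSeries.X (0 : Fin 2) - MvPowerSeries.X (1 : Fin 2)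
        - MvPowerSeries.X (0 : Fin 2) * MvPowerSeries.X (1 : Fin 2) :
          MvPowerSeries (Fin 2) ℚ)⁻¹ = G := u_inv_eq
  rw [hl, coeff_G]
  have hr : (1 - PowerSeries.X : PowerSeries ℚ)⁻¹
          * (PowerSeries.X * (1 + PowerSeries.X) * (1 - PowerSeries.X)⁻¹) ^ k = A k := rfl
  rw [hr, coeffA k n]
  congr 1 <;> simp [Finsupp.single_apply]

end
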